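/- arXiv:2209.14524 — 4 statements merged into one kernel-verified Lean document; each statement's English description precedes it below -/
import Mathlib

section
/- Let s and t be positive integers and let M be a matroid with the (s,2s,t,2t)-property. If M has an s-echidna (S_1,…,S_n) with n ≥ s+2t−1, then (S_1,…,S_n) is also a t-coechidna of M. -/
open Set Function

namespace Matroid

variable {α : Type*}

/-- A circuit of a matroid: a minimal dependent set. -/
def IsCircuit' (M : Matroid α) (C : Set α) : Prop := Minimal M.Dep C

/-- A cocircuit of a matroid: a circuit of the dual matroid. -/
def IsCocircuit' (M : Matroid α) (C : Set α) : Prop := M✶.IsCircuit' C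

/-- The `ℕ`-valued rank of a set `X` in a matroid `M`:
the size of a largest independent subset of `X`. -/
noncomputable def rk' (M : Matroid α) (X : Set α) : ℕ :=
  sSup {n : ℕ | ∃ I, M.Indep I ∧ I ⊆ X ∧ I.ncard = n}

/-- The connectivity function `λ(X) = r(X) + r(E − X) − r(M)`. -/
noncomputable def lam' (M : Matroid α) (X : Set α) : ℕ :=
  M.rk' X + M.rk' (M.E \ X) - M.rk' M.E

/-- The `(s,u,t,v)`-property: every `s`-element subset of the ground set is contained in a
circuit of size `u`, and every `t`-element subset is contained in a cocircuit of size `v`. -/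
def HasProp (M : Matroid α) (s u t v : ℕ) : Prop :=
  (∀ S ⊆ M.E, S.ncard = s → ∃ C, M.IsCircuit' C ∧ C.ncard = u ∧ S ⊆ C) ∧
  (∀ T ⊆ M.E, T.ncard = t → ∃ C, M.IsCocircuit' C ∧ C.ncard = v ∧ T ⊆ C)

/-- A `t`-echidna of order `n`: a family of `n` pairwise disjoint `2`-element subsets of the
ground set (spines) such that the union of any `t` spines is a circuit.
(A `t`-coechidna of `M` is a `t`-echidna of `M✶`.) -/
def IsEchidna (M : Matroid α) (t : ℕ) {n : ℕ} (S : Fin n → Set α) : Prop :=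
  (∀ i, S i ⊆ M.E) ∧ (∀ i, (S i).ncard = 2) ∧
  Pairwise (Function.onFun Disjoint S) ∧
  ∀ I : Finset (Fin n), I.card = t → M.IsCircuit' (⋃ i ∈ I, S i)

/-- `M` is an `(s,t)`-spike with associated partition `(A 1, …, A m)`: the `A i` are `m`
pairwise disjoint pairs partitioning the ground set, with `m ≥ max s t`, such that the union of
any `s` pairs is a circuit and the union of any `t` pairs is a cocircuit. -/
def IsSpike (M : Matroid α) (s t : ℕ) {m : ℕ} (A : Fin m → Set α) : Prop :=
  max s t ≤ m ∧ (⋃ i, A i) = M.E ∧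
  Pairwise (Function.onFun Disjoint A) ∧ (∀ i, (A i).ncard = 2) ∧
  (∀ I : Finset (Fin m), I.card = s → M.IsCircuit' (⋃ i ∈ I, A i)) ∧
  (∀ I : Finset (Fin m), I.card = t → M.IsCocircuit' (⋃ i ∈ I, A i))

end Matroid


section Aux

open Set

variable {α : Type*} {M : Matroid α} {C K : Set α} {e : α}

/-- A circuit and a cocircuit cannot intersect in exactly one element. -/
lemma orth_aux (hC : M.IsCircuit' C) (hK : M.IsCocircuit' K) (hCK : C ∩ K = {e}) : False := by
  have he : e ∈ C ∩ K := by rw [hCK]; exact mem_singleton e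
  have hCE : C ⊆ M.E := hC.1.subset_ground
  have hKE : K ⊆ M.E := hK.1.subset_ground
  have hCe : M.Indep (C \ {e}) := by
    by_contra h
    have hdep : M.Dep (C \ {e}) := ⟨h, diff_subset.trans hCE⟩
    exact ((hC.2 hdep diff_subset) he.1).2 rfl
  have hKe : M✶.Indep (K \ {e}) := by
    by_contra h
    have hdep : M✶.Dep (K \ {e}) := ⟨h, diff_subset.trans hKE⟩
    exact ((hK.2 hdep diff_subset) he.2).2 rfl
  have heCl : e ∈ M.closure (C \ {e}) := by
    have hdep : M.Dep (insert e (C \ {e})) := by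
      rw [insert_diff_singleton, insert_eq_of_mem he.1]; exact hC.1
    exact (hCe.insert_dep_iff.mp hdep).1
  have hCeK : C \ {e} ⊆ M.E \ K := by
    rintro z ⟨hzC, hze⟩
    exact ⟨hCE hzC, fun hzK => hze (hCK ▸ (⟨hzC, hzK⟩ : z ∈ C ∩ K))⟩
  have heCl2 : e ∈ M.closure (M.E \ K) := M.closure_subset_closure hCeK heCl
  have hsp : M.Spanning (M.E \ (K \ {e})) := Matroid.Coindep.compl_spanning hKe
  have hins : M.E \ (K \ {e}) = insert e (M.E \ K) := by
    have heE : e ∈ M.E := hKE he.2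
    ext z
    simp only [mem_diff, mem_singleton_iff, mem_insert_iff, not_and, not_not]
    constructor
    · rintro ⟨hzE, h2⟩
      by_cases hzK : z ∈ K
      · exact Or.inl (h2 hzK)
      · exact Or.inr ⟨hzE, hzK⟩
    · rintro (rfl | ⟨hzE, hzK⟩)
      · exact ⟨heE, fun _ => rfl⟩
      · exact ⟨hzE, fun h => absurd h hzK⟩
  have hcl : M.closure (M.E \ K) = M.E := by
    have h1 : M.closure (insert e (M.E \ K)) = M.closure (M.E \ K) :=
      Matroid.closure_insert_eq_of_mem_closure heCl2
    rw [← h1, ← hins]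
    exact hsp.closure_eq
  have hKsp : M.Spanning (M.E \ K) := ⟨hcl, diff_subset⟩
  exact hK.1.1 ((Matroid.coindep_iff_compl_spanning hKE).mpr hKsp)

lemma ncard_biUnion_two {n : ℕ} {S : Fin n → Set α}
    (hdisj : Pairwise (Function.onFun Disjoint S)) (hfin : ∀ i, (S i).Finite)
    (h2 : ∀ i, (S i).ncard = 2) (I : Finset (Fin n)) :
    (⋃ i ∈ I, S i).ncard = 2 * I.card := by
  classical
  induction I using Finset.induction_on with
  | empty => simp
  | @insert a I ha ih =>
    rw [Finset.set_biUnion_insert]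
    have hdis : Disjoint (S a) (⋃ i ∈ I, S i) := by
      rw [Set.disjoint_iUnion₂_right]
      intro i hi
      exact hdisj (fun h : a = i => ha (h ▸ hi))
    rw [Set.ncard_union_eq hdis (hfin a) (I.finite_toSet.biUnion fun i _ => hfin i),
      h2 a, ih, Finset.card_insert_of_notMem ha]
    ring

end Aux

universe u

open Matroid

/-- If `M` has the `(s,2s,t,2t)`-property and an `s`-echidna `(S 1, …, S n)` with
`n ≥ s + 2t − 1`, then `(S 1, …, S n)` is also a `t`-coechidna of `M`. -/
theorem statement1 {α : Type u} (s t n : ℕ) (hs : 0 < s) (ht : 0 < t)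
    (M : Matroid α) (hE : M.E.Finite) (hM : M.HasProp s (2 * s) t (2 * t))
    (S : Fin n → Set α) (hS : M.IsEchidna s S) (hn : s + 2 * t - 1 ≤ n) :
    M✶.IsEchidna t S := by
  classical
  obtain ⟨hSE, hS2, hdisj, hcirc⟩ := hS
  refine ⟨hSE, hS2, hdisj, ?_⟩
  intro I hI
  choose x y hxy hSxy using fun i => Set.ncard_eq_two.mp (hS2 i)
  have hxS : ∀ i, x i ∈ S i := fun i => by rw [hSxy i]; exact Or.inl rfl
  have hyS : ∀ i, y i ∈ S i := fun i => by rw [hSxy i]; exact Or.inr rfl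
  have hSfin : ∀ i, (S i).Finite := fun i => hE.subset (hSE i)
  have hinj : Set.InjOn x ↑I := by
    intro i _ j _ hij
    by_contra hne
    exact (hdisj hne).ne_of_mem (hxS i) (hxS j) hij
  have hT : x '' ↑I ⊆ M.E := by
    rintro a ⟨i, hi, rfl⟩
    exact hSE i (hxS i)
  have hTcard : (x '' ↑I).ncard = t := by
    rw [Set.ncard_image_of_injOn hinj, Set.ncard_coe_finset, hI]
  obtain ⟨K, hK, hKcard, hTK⟩ := hM.2 _ hT hTcard
  have hKE : K ⊆ M.E := hK.1.subset_ground
  have hKfin : K.Finite := hE.subset hKE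
  have hsub : ∀ i ∈ I, S i ⊆ K := by
    intro i hi
    have hxK : x i ∈ K := hTK ⟨i, hi, rfl⟩
    rw [hSxy i]
    rintro z (rfl | rfl)
    · exact hxK
    by_contra hyK
    set B : Finset (Fin n) := Finset.univ.filter (fun j => (S j ∩ K).Nonempty) with hB
    set g : Fin n → α := fun j =>
      if h : (S j ∩ K).Nonempty then h.choose else x j with hg
    have hgmem : ∀ j ∈ B, g j ∈ S j ∩ K := by
      intro j hj
      have h : (S j ∩ K).Nonempty := (Finset.mem_filter.mp hj).2
      simpa [hg, h] using h.choose_spec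
    have hBcard : B.card ≤ 2 * t := by
      have h1 : B.card ≤ hKfin.toFinset.card := by
        refine Finset.card_le_card_of_injOn g
          (fun j hj => hKfin.mem_toFinset.mpr (hgmem j hj).2) ?_
        intro j hj j' hj' hjj'
        by_contra hne
        exact (hdisj hne).ne_of_mem (hgmem j hj).1 (hgmem j' hj').1 hjj'
      rwa [← Set.ncard_eq_toFinset_card K hKfin, hKcard] at h1
    have hBc : s - 1 ≤ Bᶜ.card := by
      rw [Finset.card_compl, Fintype.card_fin]
      omega
    obtain ⟨J, hJsub, hJcard⟩ := Finset.exists_subset_card_eq hBc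
    have hiB : i ∈ B := Finset.mem_filter.mpr ⟨Finset.mem_univ i, ⟨x i, hxS i, hxK⟩⟩
    have hiJ : i ∉ J := fun h => (Finset.mem_compl.mp (hJsub h)) hiB
    have hI'card : (insert i J).card = s := by
      rw [Finset.card_insert_of_notMem hiJ, hJcard]
      omega
    have hC := hcirc _ hI'card
    have hCK : (⋃ j ∈ insert i J, S j) ∩ K = {x i} := by
      ext z
      constructor
      · rintro ⟨hzC, hzK⟩
        simp only [Set.mem_iUnion, exists_prop] at hzC
        obtain ⟨j, hj, hzS⟩ := hzC
        rcases Finset.mem_insert.mp hj with rfl | hjJ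
        · rw [hSxy j] at hzS
          rcases hzS with rfl | rfl
          · rfl
          · exact absurd hzK hyK
        · have hjB : j ∉ B := Finset.mem_compl.mp (hJsub hjJ)
          exact absurd (Finset.mem_filter.mpr ⟨Finset.mem_univ j, ⟨z, hzS, hzK⟩⟩) hjB
      · rintro rfl
        refine ⟨Set.mem_biUnion (Finset.mem_insert_self i J) (hxS i), hxK⟩
    exact absurd hCK (fun h => orth_aux hC hK h)
  have hunion_sub : (⋃ i ∈ I, S i) ⊆ K := Set.iUnion₂_subset hsub
  have hcard_union : (⋃ i ∈ I, S i).ncard = 2 * t := by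
    rw [ncard_biUnion_two hdisj hSfin hS2, hI]
  have heq : (⋃ i ∈ I, S i) = K :=
    Set.eq_of_subset_of_ncard_le hunion_sub (by rw [hKcard, hcard_union]) hKfin
  rw [Matroid.IsCircuit', heq]
  exact hK
end

section
/- Let s and t be positive integers, let M be a matroid with the (s,2s,t,2t)-property, and let (S_1,…,S_n) be an s-echidna of M with n ≥ max{s+2t,2s+t}−1. If I is an (s−1)-element subset of {1,…,n} and z ∈ E(M) − ⋃_{i∈I} S_i, then there is a 2s-element circuit of M containing {z} ∪ ⋃_{i∈I} S_i. -/
open Set Function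

universe u

open Matroid

section Aux

variable {β : Type*} {M : Matroid β} {C K : Set β} {e : β}

lemma aux_circuit_diff_indep (h : M.IsCircuit' C) (he : e ∈ C) : M.Indep (C \ {e}) := by
  by_contra hi
  have hdep : M.Dep (C \ {e}) := ⟨hi, diff_subset.trans h.1.subset_ground⟩
  exact ((h.2 hdep diff_subset) he).2 rfl

lemma aux_circuit_mem_closure (h : M.IsCircuit' C) (he : e ∈ C) :
    e ∈ M.closure (C \ {e}) := by
  have hi := aux_circuit_diff_indep h he
  by_contra hcl
  have hind : M.Indep (insert e (C \ {e})) := by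
    rw [hi.insert_indep_iff]
    exact Or.inl ⟨h.1.subset_ground he, hcl⟩
  rw [insert_diff_singleton, insert_eq_of_mem he] at hind
  exact h.1.1 hind

lemma aux_cocircuit_subset_ground (h : M.IsCocircuit' K) : K ⊆ M.E := by
  have := h.1.subset_ground
  simpa using this

lemma aux_orth (hC : M.IsCircuit' C) (hK : M.IsCocircuit' K) : C ∩ K ≠ {e} := by
  intro h
  have he : e ∈ C ∩ K := h ▸ mem_singleton e
  have heC : e ∈ C := he.1
  have heK : e ∈ K := he.2
  have heE : e ∈ M.E := hC.1.subset_ground heC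
  have hKE : K ⊆ M.E := aux_cocircuit_subset_ground hK
  have hKe : M✶.Indep (K \ {e}) := by
    by_contra hi
    have hdep : M✶.Dep (K \ {e}) := ⟨hi, diff_subset.trans hK.1.subset_ground⟩
    exact ((hK.2 hdep diff_subset) heK).2 rfl
  have hsp : M.Spanning (M.E \ (K \ {e})) := Matroid.Coindep.compl_spanning hKe
  have hset : M.E \ (K \ {e}) = insert e (M.E \ K) := by
    rw [diff_diff_right]
    have h1 : M.E ∩ {e} = {e} := inter_eq_self_of_subset_right (singleton_subset_iff.mpr heE)
    rw [h1, union_singleton]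
  rw [hset] at hsp
  have hsub : C \ {e} ⊆ M.E \ K := by
    rintro w ⟨hwC, hwe⟩
    refine ⟨hC.1.subset_ground hwC, fun hwK => hwe ?_⟩
    have hw : w ∈ C ∩ K := ⟨hwC, hwK⟩
    rw [h] at hw
    exact hw
  have hecl : e ∈ M.closure (M.E \ K) :=
    M.closure_subset_closure hsub (aux_circuit_mem_closure hC heC)
  have hcleq : M.closure (insert e (M.E \ K)) = M.closure (M.E \ K) :=
    closure_insert_eq_of_mem_closure hecl
  have hsp2 : M.Spanning (M.E \ K) :=
    ⟨by rw [← hcleq]; exact hsp.closure_eq, diff_subset⟩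
  have hco : M.Coindep K := (coindep_iff_compl_spanning hKE).mpr hsp2
  exact hK.1.1 hco

lemma aux_ncard_biUnion {n : ℕ} {S : Fin n → Set β}
    (hdisj : Pairwise (Function.onFun Disjoint S))
    (hfin : ∀ i, (S i).Finite) (h2 : ∀ i, (S i).ncard = 2) (A : Finset (Fin n)) :
    (⋃ i ∈ A, S i).ncard = 2 * A.card := by
  classical
  induction A using Finset.induction_on with
  | empty => simp
  | @insert a A ha ih =>
    rw [Finset.set_biUnion_insert,
      Set.ncard_union_eq (disjoint_iUnion₂_right.mpr fun i hi =>
          hdisj (fun h : a = i => ha (h ▸ hi)))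
        (hfin a) (A.finite_toSet.biUnion fun i _ => hfin i),
      h2, ih, Finset.card_insert_of_notMem ha]
    ring

lemma aux_factA {n s t : ℕ} {M : Matroid β} (hE : M.E.Finite) {S : Fin n → Set β}
    (hS : M.IsEchidna s S) (hs : 0 < s) (ht : 0 < t) (hn : s + 2 * t ≤ n + 1)
    {K : Set β} (hK : M.IsCocircuit' K) (hKcard : K.ncard = 2 * t)
    {i : Fin n} (hint : (S i ∩ K).Nonempty) : S i ⊆ K := by
  classical
  obtain ⟨hSE, hS2, hdisj, hcirc⟩ := hS
  obtain ⟨u, huS, huK⟩ := hint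
  by_contra hns
  obtain ⟨v, hvS, hvK⟩ := not_subset.mp hns
  have hKE : K ⊆ M.E := aux_cocircuit_subset_ground hK
  have hKfin : K.Finite := hE.subset hKE
  have hSfin : ∀ j, (S j).Finite := fun j => hE.subset (hSE j)
  have huv : u ≠ v := fun h => hvK (h ▸ huK)
  have hSi : S i = {u, v} := by
    have hsub : ({u, v} : Set β) ⊆ S i := by
      rintro w (rfl | rfl)
      · exact huS
      · exact hvS
    exact (Set.eq_of_subset_of_ncard_le hsub
      (by rw [hS2 i, Set.ncard_pair huv]) (hSfin i)).symm
  have hSiK : S i ∩ K = {u} := by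
    apply Set.eq_singleton_iff_unique_mem.mpr
    refine ⟨⟨huS, huK⟩, ?_⟩
    rintro w ⟨hwS, hwK⟩
    rw [hSi] at hwS
    rcases hwS with rfl | rfl
    · rfl
    · exact absurd hwK hvK
  set f : Fin n → β := fun j => if h : (S j ∩ K).Nonempty then h.choose else u with hf
  have hfmem : ∀ j, (S j ∩ K).Nonempty → f j ∈ S j ∩ K := by
    intro j hj
    rw [hf]
    simp only [dif_pos hj]
    exact hj.choose_spec
  set G : Finset (Fin n) := Finset.univ.filter (fun j => j ≠ i ∧ (S j ∩ K).Nonempty) with hG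
  have hGcard : G.card ≤ 2 * t - 1 := by
    have h1 : (↑G : Set (Fin n)).ncard ≤ (K \ S i).ncard := by
      apply Set.ncard_le_ncard_of_injOn f ?_ ?_ hKfin.diff
      · intro j hj
        rw [Finset.mem_coe, hG, Finset.mem_filter] at hj
        obtain ⟨-, hji, hjne⟩ := hj
        obtain ⟨hm1, hm2⟩ := hfmem j hjne
        exact ⟨hm2, fun hmem => Set.disjoint_left.mp (hdisj hji) hm1 hmem⟩
      · intro j1 hj1 j2 hj2 heq
        by_contra hne'
        rw [Finset.mem_coe, hG, Finset.mem_filter] at hj1 hj2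
        exact Set.disjoint_left.mp (hdisj hne') (hfmem j1 hj1.2.2).1
          (heq ▸ (hfmem j2 hj2.2.2).1)
    have h2 : K \ S i = K \ {u} := by
      ext w
      simp only [mem_diff, mem_singleton_iff]
      constructor
      · rintro ⟨h1', h2'⟩
        exact ⟨h1', fun h => h2' (h ▸ huS)⟩
      · rintro ⟨h1', h2'⟩
        refine ⟨h1', fun hmem => h2' ?_⟩
        have hw : w ∈ S i ∩ K := ⟨hmem, h1'⟩
        rw [hSiK] at hw
        exact hw
    rw [h2, Set.ncard_diff_singleton_of_mem huK, hKcard, Set.ncard_coe_finset] at h1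
    omega
  have hAcard : s - 1 ≤ ((Finset.univ : Finset (Fin n)) \ insert i G).card := by
    rw [Finset.card_sdiff_of_subset (Finset.subset_univ _), Finset.card_univ, Fintype.card_fin]
    have h4 : (insert i G).card ≤ G.card + 1 := Finset.card_insert_le _ _
    omega
  obtain ⟨F, hFsub, hFcard⟩ := Finset.exists_subset_card_eq hAcard
  have hFi : i ∉ F := fun h =>
    (Finset.mem_sdiff.mp (hFsub h)).2 (Finset.mem_insert_self i G)
  have hFprop : ∀ j ∈ F, j ≠ i ∧ S j ∩ K = ∅ := by
    intro j hj
    have hj' := Finset.mem_sdiff.mp (hFsub hj)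
    have hji : j ≠ i := fun h => hj'.2 (h ▸ Finset.mem_insert_self i G)
    refine ⟨hji, ?_⟩
    have hjG : j ∉ G := fun h => hj'.2 (Finset.mem_insert_of_mem h)
    rw [hG, Finset.mem_filter] at hjG
    push_neg at hjG
    exact hjG (Finset.mem_univ j) hji
  have hcard' : (insert i F).card = s := by
    rw [Finset.card_insert_of_notMem hFi, hFcard]
    omega
  have hD := hcirc (insert i F) hcard'
  have heq : (⋃ j ∈ insert i F, S j) ∩ K = {u} := by
    apply Set.eq_singleton_iff_unique_mem.mpr
    constructor
    · exact ⟨Set.mem_biUnion (Finset.mem_insert_self i F) huS, huK⟩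
    · rintro w ⟨hwD, hwK⟩
      simp only [Set.mem_iUnion] at hwD
      obtain ⟨j, hj, hwS⟩ := hwD
      rcases Finset.mem_insert.mp hj with rfl | hjF
      · have hw : w ∈ S j ∩ K := ⟨hwS, hwK⟩
        rw [hSiK] at hw
        exact hw
      · have hmem : w ∈ S j ∩ K := ⟨hwS, hwK⟩
        rw [(hFprop j hjF).2] at hmem
        exact hmem.elim
  exact aux_orth hD hK heq

end Aux

/-- If `M` has the `(s,2s,t,2t)`-property and an `s`-echidna of order
`n ≥ max (s+2t) (2s+t) − 1`, then for any `(s−1)`-element set `I ⊆ [n]` and any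
`z ∈ E(M) − ⋃_{i ∈ I} S i`, there is a `2s`-element circuit containing `{z} ∪ ⋃_{i ∈ I} S i`. -/
theorem statement2 {α : Type u} (s t n : ℕ) (hs : 0 < s) (ht : 0 < t)
    (M : Matroid α) (hE : M.E.Finite) (hM : M.HasProp s (2 * s) t (2 * t))
    (S : Fin n → Set α) (hS : M.IsEchidna s S)
    (hn : max (s + 2 * t) (2 * s + t) - 1 ≤ n)
    (I : Finset (Fin n)) (hI : I.card = s - 1)
    (z : α) (hz : z ∈ M.E \ ⋃ i ∈ I, S i) :
    ∃ C, M.IsCircuit' C ∧ C.ncard = 2 * s ∧ insert z (⋃ i ∈ I, S i) ⊆ C := by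
  classical
  have hn1 : s + 2 * t ≤ n + 1 := by
    have h1 := le_max_left (s + 2 * t) (2 * s + t)
    generalize hm : max (s + 2 * t) (2 * s + t) = m at h1 hn
    omega
  have hn2 : 2 * s + t ≤ n + 1 := by
    have h1 := le_max_right (s + 2 * t) (2 * s + t)
    generalize hm : max (s + 2 * t) (2 * s + t) = m at h1 hn
    omega
  obtain ⟨hSE, hS2, hdisj, hcirc⟩ := hS
  have hSfin : ∀ j, (S j).Finite := fun j => hE.subset (hSE j)
  have hxy : ∀ j, ∃ a b, a ≠ b ∧ S j = {a, b} := fun j => Set.ncard_eq_two.mp (hS2 j)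
  choose x y hne hSeq using hxy
  have hxS : ∀ j, x j ∈ S j := fun j => by rw [hSeq j]; exact Set.mem_insert _ _
  have hyS : ∀ j, y j ∈ S j := fun j => by rw [hSeq j]; exact Set.mem_insert_of_mem _ rfl
  have hxinj : Function.Injective x := by
    intro a b hab
    by_contra hne'
    exact Set.disjoint_left.mp (hdisj hne') (hxS a) (hab ▸ hxS b)
  have hzE : z ∈ M.E := hz.1
  have hzZ : z ∉ ⋃ i ∈ I, S i := hz.2
  have hZE : (⋃ i ∈ I, S i) ⊆ M.E := Set.iUnion₂_subset fun j _ => hSE j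
  have hxIZ : x '' ↑I ⊆ ⋃ i ∈ I, S i := by
    rintro w ⟨j, hj, rfl⟩
    exact Set.mem_biUnion hj (hxS j)
  have hzx : z ∉ x '' ↑I := fun h => hzZ (hxIZ h)
  have hTcard : (insert z (x '' ↑I)).ncard = s := by
    rw [Set.ncard_insert_of_notMem hzx ((I.finite_toSet).image x),
      Set.ncard_image_of_injective _ hxinj, Set.ncard_coe_finset, hI]
    omega
  have hTE : insert z (x '' ↑I) ⊆ M.E :=
    insert_subset hzE (fun w hw => hZE (hxIZ hw))
  obtain ⟨C, hC, hCcard, hTC⟩ := hM.1 _ hTE hTcard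
  have hCE : C ⊆ M.E := hC.1.subset_ground
  have hCfin : C.Finite := hE.subset hCE
  have hzC : z ∈ C := hTC (Set.mem_insert _ _)
  have hxC : ∀ i ∈ I, x i ∈ C := fun i hi =>
    hTC (Set.mem_insert_of_mem _ ⟨i, hi, rfl⟩)
  have hyC : ∀ i ∈ I, y i ∈ C := by
    intro i hiI
    by_contra hyiC
    set G : Finset (Fin n) := Finset.univ.filter (fun j => j ∉ I ∧ (S j ∩ C).Nonempty)
      with hGdef
    have hGcard : G.card ≤ s + 1 := by
      set f : Fin n → α := fun j => if h : (S j ∩ C).Nonempty then h.choose else z with hfdef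
      have hfmem : ∀ j, (S j ∩ C).Nonempty → f j ∈ S j ∩ C := by
        intro j hj
        rw [hfdef]
        simp only [dif_pos hj]
        exact hj.choose_spec
      have h1 : (↑G : Set (Fin n)).ncard ≤ (C \ ⋃ i ∈ I, S i).ncard := by
        apply Set.ncard_le_ncard_of_injOn f ?_ ?_ hCfin.diff
        · intro j hj
          rw [Finset.mem_coe, hGdef, Finset.mem_filter] at hj
          obtain ⟨-, hjI, hjne⟩ := hj
          obtain ⟨hm1, hm2⟩ := hfmem j hjne
          refine ⟨hm2, fun hmem => ?_⟩
          simp only [Set.mem_iUnion] at hmem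
          obtain ⟨i', hi', hmem⟩ := hmem
          exact Set.disjoint_left.mp
            (hdisj (show j ≠ i' from fun h => hjI (h ▸ hi'))) hm1 hmem
        · intro j1 hj1 j2 hj2 heq
          by_contra hne'
          rw [Finset.mem_coe, hGdef, Finset.mem_filter] at hj1 hj2
          exact Set.disjoint_left.mp (hdisj hne') (hfmem j1 hj1.2.2).1
            (heq ▸ (hfmem j2 hj2.2.2).1)
      have h2 : (C ∩ ⋃ i ∈ I, S i).ncard + (C \ ⋃ i ∈ I, S i).ncard = 2 * s := by
        rw [← Set.ncard_union_eq (Set.disjoint_sdiff_inter.symm)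
          (hCfin.subset inter_subset_left) (hCfin.subset diff_subset),
          Set.inter_union_diff, hCcard]
      have h3 : s - 1 ≤ (C ∩ ⋃ i ∈ I, S i).ncard := by
        have hsub : x '' ↑I ⊆ C ∩ ⋃ i ∈ I, S i := by
          rintro w ⟨j, hj, rfl⟩
          exact ⟨hxC j hj, hxIZ ⟨j, hj, rfl⟩⟩
        calc s - 1 = (x '' ↑I).ncard := by
              rw [Set.ncard_image_of_injective _ hxinj, Set.ncard_coe_finset, hI]
          _ ≤ _ := Set.ncard_le_ncard hsub (hCfin.subset inter_subset_left)
      rw [Set.ncard_coe_finset] at h1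
      omega
    have hAcard : t - 1 ≤ ((Finset.univ : Finset (Fin n)) \ (I ∪ G)).card := by
      rw [Finset.card_sdiff_of_subset (Finset.subset_univ _), Finset.card_univ, Fintype.card_fin]
      have h5 := Finset.card_union_le I G
      omega
    obtain ⟨F, hFsub, hFcard⟩ := Finset.exists_subset_card_eq hAcard
    have hFprop : ∀ j ∈ F, j ∉ I ∧ S j ∩ C = ∅ := by
      intro j hj
      have hj' := Finset.mem_sdiff.mp (hFsub hj)
      rw [Finset.mem_union] at hj'
      push_neg at hj'
      obtain ⟨-, hjI, hjG⟩ := hj'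
      refine ⟨hjI, ?_⟩
      rw [hGdef, Finset.mem_filter] at hjG
      push_neg at hjG
      exact hjG (Finset.mem_univ j) hjI
    have hiF : i ∉ F := fun h => (hFprop i h).1 hiI
    have hyix : y i ∉ x '' ↑F := by
      rintro ⟨j, hj, hxj⟩
      have hji : j ≠ i := fun h => (hFprop j hj).1 (h ▸ hiI)
      refine Set.disjoint_left.mp (hdisj hji) (hxS j) ?_
      rw [hxj]
      exact hyS i
    have hT'card : (insert (y i) (x '' ↑F)).ncard = t := by
      rw [Set.ncard_insert_of_notMem hyix (F.finite_toSet.image x),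
        Set.ncard_image_of_injective _ hxinj, Set.ncard_coe_finset, hFcard]
      omega
    have hT'E : insert (y i) (x '' ↑F) ⊆ M.E := by
      refine insert_subset (hSE i (hyS i)) ?_
      rintro w ⟨j, hj, rfl⟩
      exact hSE j (hxS j)
    obtain ⟨K, hK, hKcard, hT'K⟩ := hM.2 _ hT'E hT'card
    have hKE := aux_cocircuit_subset_ground hK
    have hKfin : K.Finite := hE.subset hKE
    have hSiK : S i ⊆ K :=
      aux_factA hE ⟨hSE, hS2, hdisj, hcirc⟩ hs ht hn1 hK hKcard
        ⟨y i, hyS i, hT'K (Set.mem_insert _ _)⟩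
    have hSjK : ∀ j ∈ F, S j ⊆ K := fun j hj =>
      aux_factA hE ⟨hSE, hS2, hdisj, hcirc⟩ hs ht hn1 hK hKcard
        ⟨x j, hxS j, hT'K (Set.mem_insert_of_mem _ ⟨j, hj, rfl⟩)⟩
    have hUK : (⋃ j ∈ insert i F, S j) ⊆ K := by
      intro w hw
      simp only [Set.mem_iUnion] at hw
      obtain ⟨j, hj, hw⟩ := hw
      rcases Finset.mem_insert.mp hj with rfl | hjF
      · exact hSiK hw
      · exact hSjK j hjF hw
    have hUcard : (⋃ j ∈ insert i F, S j).ncard = 2 * t := by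
      rw [aux_ncard_biUnion hdisj hSfin hS2, Finset.card_insert_of_notMem hiF, hFcard]
      omega
    have hKeq : K = ⋃ j ∈ insert i F, S j :=
      (Set.eq_of_subset_of_ncard_le hUK (by rw [hUcard, hKcard]) hKfin).symm
    have hfinal : C ∩ K = {x i} := by
      apply Set.eq_singleton_iff_unique_mem.mpr
      refine ⟨⟨hxC i hiI, hSiK (hxS i)⟩, ?_⟩
      rintro w ⟨hwC, hwK⟩
      rw [hKeq] at hwK
      simp only [Set.mem_iUnion] at hwK
      obtain ⟨j, hj, hwS⟩ := hwK
      rcases Finset.mem_insert.mp hj with rfl | hjF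
      · rw [hSeq j] at hwS
        simp only [Set.mem_insert_iff, Set.mem_singleton_iff] at hwS
        rcases hwS with rfl | rfl
        · rfl
        · exact absurd hwC hyiC
      · have hmem : w ∈ S j ∩ C := ⟨hwS, hwC⟩
        rw [(hFprop j hjF).2] at hmem
        exact hmem.elim
    exact aux_orth hC hK hfinal
  refine ⟨C, hC, hCcard, ?_⟩
  refine insert_subset hzC ?_
  intro w hw
  simp only [Set.mem_iUnion] at hw
  obtain ⟨j, hj, hw⟩ := hw
  rw [hSeq j] at hw
  simp only [Set.mem_insert_iff, Set.mem_singleton_iff] at hw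
  rcases hw with rfl | rfl
  · exact hxC j hj
  · exact hyC j hj
end

section
/- Let s and t be positive integers, let M be a matroid with the (s,2s,t,2t)-property, and let (S_1,…,S_n) be an s-echidna of M with n ≥ max{s+2t,2s+t}−1. If I is a (t−1)-element subset of {1,…,n} and z ∈ E(M) − ⋃_{i∈I} S_i, then there is a 2t-element cocircuit of M containing {z} ∪ ⋃_{i∈I} S_i. -/
open Set Function

universe u

open Matroid

namespace Matroid

variable {α : Type*} {M : Matroid α} {C K : Set α} {x : α}

lemma IsCircuit'.subset_ground' (hC : M.IsCircuit' C) : C ⊆ M.E := hC.1.subset_ground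

lemma IsCircuit'.diff_singleton_indep' (hC : M.IsCircuit' C) (hx : x ∈ C) :
    M.Indep (C \ {x}) := by
  by_contra h
  have hdep : M.Dep (C \ {x}) :=
    (M.not_indep_iff (diff_subset.trans hC.subset_ground')).1 h
  exact ((hC.2 hdep diff_subset) hx).2 rfl

lemma IsCircuit'.mem_closure_diff' (hC : M.IsCircuit' C) (hx : x ∈ C) :
    x ∈ M.closure (C \ {x}) := by
  have hI := hC.diff_singleton_indep' hx
  have hdep : M.Dep (insert x (C \ {x})) := by
    rw [Set.insert_diff_singleton, Set.insert_eq_of_mem hx]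
    exact hC.1
  exact (hI.insert_dep_iff.1 hdep).1

lemma IsCocircuit'.closure_compl' (hK : M.IsCocircuit' K) :
    M.closure (M.E \ K) = M.E \ K := by
  have hKE : K ⊆ M.E := hK.1.subset_ground
  refine subset_antisymm ?_ (M.subset_closure _ diff_subset)
  rintro f hf
  have hfE : f ∈ M.E := M.closure_subset_ground _ hf
  refine ⟨hfE, fun hfK => ?_⟩
  have hcoind : M✶.Indep (K \ {f}) := by
    by_contra h
    have hdep : M✶.Dep (K \ {f}) :=
      ⟨h, fun y hy => hKE hy.1⟩
    exact ((hK.2 hdep diff_subset) hfK).2 rfl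
  have hsp : M.Spanning (M.E \ (K \ {f})) :=
    (M.coindep_iff_compl_spanning (diff_subset.trans hKE)).1 hcoind
  have heq : M.E \ (K \ {f}) = insert f (M.E \ K) := by
    rw [Set.diff_diff_right]
    rw [Set.inter_eq_self_of_subset_right (by simpa using hKE hfK)]
    rw [Set.union_singleton]
  rw [heq, spanning_iff_closure_eq (Set.insert_subset hfE diff_subset)] at hsp
  rw [closure_insert_eq_of_mem_closure hf] at hsp
  have hspan : M.Spanning (M.E \ K) := by
    rw [spanning_iff_closure_eq diff_subset]
    exact hsp
  have hKco : M.Coindep K := by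
    have h2 := (M.spanning_iff_compl_coindep diff_subset).1 hspan
    rwa [Set.diff_diff_cancel_left hKE] at h2
  exact hK.1.not_indep hKco

lemma IsCircuit'.inter_cocircuit_ne_singleton' (hC : M.IsCircuit' C)
    (hK : M.IsCocircuit' K) (h : C ∩ K = {x}) : False := by
  have hxCK : x ∈ C ∩ K := h ▸ rfl
  have hsub : C \ {x} ⊆ M.E \ K := fun y hy =>
    ⟨hC.subset_ground' hy.1, fun hyK => hy.2 (by rw [← h] at *; exact ⟨hy.1, hyK⟩)⟩
  have hx1 := hC.mem_closure_diff' hxCK.1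
  have hx2 := M.closure_subset_closure hsub hx1
  rw [hK.closure_compl'] at hx2
  exact hx2.2 hxCK.2

end Matroid

/-- If `M` has the `(s,2s,t,2t)`-property and an `s`-echidna of order
`n ≥ max (s+2t) (2s+t) − 1`, then for any `(t−1)`-element set `I ⊆ [n]` and any
`z ∈ E(M) − ⋃_{i ∈ I} S i`, there is a `2t`-element cocircuit containing
`{z} ∪ ⋃_{i ∈ I} S i`. -/
theorem statement3 {α : Type u} (s t n : ℕ) (hs : 0 < s) (ht : 0 < t)
    (M : Matroid α) (hE : M.E.Finite) (hM : M.HasProp s (2 * s) t (2 * t))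
    (S : Fin n → Set α) (hS : M.IsEchidna s S)
    (hn : max (s + 2 * t) (2 * s + t) - 1 ≤ n)
    (I : Finset (Fin n)) (hI : I.card = t - 1)
    (z : α) (hz : z ∈ M.E \ ⋃ i ∈ I, S i) :
    ∃ C, M.IsCocircuit' C ∧ C.ncard = 2 * t ∧ insert z (⋃ i ∈ I, S i) ⊆ C := by
  classical
  obtain ⟨hSE, hS2, hdisj, hcirc⟩ := hS
  obtain ⟨hzE, hzS⟩ := hz
  have hSne : ∀ i, (S i).Nonempty := fun i =>
    Set.nonempty_of_ncard_ne_zero (by rw [hS2 i]; norm_num)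
  choose f hf using hSne
  have hfinj : Function.Injective f := by
    intro i j hij
    by_contra hne
    exact (hdisj hne).ne_of_mem (hf i) (hf j) hij
  have hzI : z ∉ f '' (I : Set (Fin n)) := by
    rintro ⟨i, hi, rfl⟩
    exact hzS (Set.mem_biUnion hi (hf i))
  set T : Set α := insert z (f '' (I : Set (Fin n))) with hT
  have hTE : T ⊆ M.E := by
    rintro w (rfl | ⟨i, hi, rfl⟩)
    · exact hzE
    · exact hSE i (hf i)
  have hTcard : T.ncard = t := by
    rw [hT, Set.ncard_insert_of_notMem hzI (I.finite_toSet.image f),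
      Set.ncard_image_of_injective _ hfinj, Set.ncard_coe_finset, hI]
    omega
  obtain ⟨C, hC, hCcard, hTC⟩ := hM.2 T hTE hTcard
  have hCE : C ⊆ M.E := hC.1.subset_ground
  have hCfin : C.Finite := hE.subset hCE
  -- the counting function g
  set g : Fin n → α := fun j => if h : (S j ∩ C).Nonempty then h.choose else f j with hg
  have hgmem : ∀ j, g j ∈ S j := by
    intro j
    by_cases h : (S j ∩ C).Nonempty
    · have he : g j = h.choose := by simp only [hg]; exact dif_pos h
      rw [he]; exact h.choose_spec.1
    · have he : g j = f j := by simp only [hg]; exact dif_neg h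
      rw [he]; exact hf j
  have hgC : ∀ j, (S j ∩ C).Nonempty → g j ∈ C := by
    intro j h
    have he : g j = h.choose := by simp only [hg]; exact dif_pos h
    rw [he]; exact h.choose_spec.2
  have hginj : Function.Injective g := by
    intro i j hij
    by_contra hne
    exact (hdisj hne).ne_of_mem (hgmem i) (hgmem j) hij
  set J : Finset (Fin n) := Finset.univ.filter (fun j => (S j ∩ C).Nonempty) with hJ
  have hJcard : J.card ≤ 2 * t := by
    have : J.card ≤ hCfin.toFinset.card := by
      apply Finset.card_le_card_of_injOn g
      · intro j hj
        rw [Finset.mem_coe, Set.Finite.mem_toFinset]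
        exact hgC j (by simpa [hJ] using hj)
      · exact hginj.injOn
    rwa [← Set.ncard_eq_toFinset_card _ hCfin, hCcard] at this
  have hn' : s + 2 * t - 1 ≤ n := le_trans (by omega) hn
  have hcompl : s - 1 ≤ Jᶜ.card := by
    rw [Finset.card_compl, Fintype.card_fin]
    omega
  obtain ⟨K, hKsub, hKcard⟩ := Finset.exists_subset_card_eq hcompl
  -- main claim
  have hkey : ∀ i ∈ I, S i ⊆ C := by
    intro i hi
    by_contra hnot
    obtain ⟨y, hyS, hyC⟩ := Set.not_subset.1 hnot
    have hfiC : f i ∈ C := hTC (Set.mem_insert_of_mem _ ⟨i, hi, rfl⟩)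
    have hyne : f i ≠ y := fun h => hyC (h ▸ hfiC)
    have hSieq : ({f i, y} : Set α) = S i := by
      apply Set.eq_of_subset_of_ncard_le
      · exact Set.insert_subset (hf i) (Set.singleton_subset_iff.2 hyS)
      · rw [hS2 i, Set.ncard_pair hyne]
      · exact hE.subset (hSE i)
    have hSiC : S i ∩ C = {f i} := by
      rw [← hSieq]
      ext w
      constructor
      · rintro ⟨(rfl | rfl), hwC⟩
        · rfl
        · exact absurd hwC hyC
      · rintro rfl
        exact ⟨Set.mem_insert _ _, hfiC⟩
    have hiJ : i ∈ J := by
      simp only [hJ, Finset.mem_filter, Finset.mem_univ, true_and]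
      exact ⟨f i, hf i, hfiC⟩
    have hiK : i ∉ K := fun h => (Finset.mem_compl.1 (hKsub h)) hiJ
    set L : Finset (Fin n) := insert i K with hL
    have hLcard : L.card = s := by
      rw [hL, Finset.card_insert_of_notMem hiK, hKcard]
      omega
    have hD := hcirc L hLcard
    have hDC : (⋃ j ∈ L, S j) ∩ C = {f i} := by
      ext w
      constructor
      · rintro ⟨hwD, hwC⟩
        obtain ⟨k, hk, hw⟩ := Set.mem_iUnion₂.1 hwD
        rcases Finset.mem_insert.1 hk with h1 | hkK
        · subst h1
          have hm : w ∈ S k ∩ C := ⟨hw, hwC⟩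
          rwa [hSiC] at hm
        · exact (Finset.mem_compl.1 (hKsub hkK)
            (Finset.mem_filter.2 ⟨Finset.mem_univ _, ⟨w, hw, hwC⟩⟩)).elim
      · rintro rfl
        exact ⟨Set.mem_biUnion (Finset.mem_insert_self i K) (hf i), hfiC⟩
    exact hD.inter_cocircuit_ne_singleton' hC hDC
  refine ⟨C, hC, hCcard, ?_⟩
  rintro w (rfl | hw)
  · exact hTC (Set.mem_insert _ _)
  · obtain ⟨i, hi, hw⟩ := Set.mem_iUnion₂.1 hw
    exact hkey i hi hw
end

section
/- Let s and t be positive integers, let M be a matroid with the (s,2s,t,2t)-property, and let X ⊆ E(M). If the rank r(X) = s, then the restriction M|X is the uniform matroid U_{s,|X|} (that is, a subset of X is independent in M if and only if it has at most s elements), and |X| < s + 2t. -/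
open Set Function

namespace Matroid

variable {α : Type*}

/-- Any finite dependent set contains a circuit. -/
lemma Dep.exists_isCircuit'_subset {M : Matroid α} {Y : Set α} (hY : M.Dep Y)
    (hfin : Y.Finite) : ∃ C ⊆ Y, M.IsCircuit' C := by
  obtain ⟨C, ⟨hCY, hCdep⟩, hmin⟩ :=
    Set.Finite.exists_minimalFor id {D | D ⊆ Y ∧ M.Dep D}
      (hfin.finite_subsets.subset (fun D hD => hD.1)) ⟨Y, Set.Subset.rfl, hY⟩
  exact ⟨C, hCY, hCdep, fun D hD hDC => hmin ⟨hDC.trans hCY, hD⟩ hDC⟩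

end Matroid

universe u

open Matroid

/-- If `M` has the `(s,2s,t,2t)`-property, `X ⊆ E(M)` and `r(X) = s`, then
`M|X ≅ U_{s,|X|}` (a subset of `X` is independent iff it has at most `s` elements) and
`|X| < s + 2t`. -/
theorem statement6 {α : Type u} (s t : ℕ) (hs : 0 < s) (ht : 0 < t)
    (M : Matroid α) (hE : M.E.Finite) (hM : M.HasProp s (2 * s) t (2 * t))
    (X : Set α) (hX : X ⊆ M.E) (hr : M.rk' X = s) :
    (∀ Y ⊆ X, (M.Indep Y ↔ Y.ncard ≤ s)) ∧ X.ncard < s + 2 * t := by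
  have hXfin : X.Finite := hE.subset hX
  set R := {n : ℕ | ∃ I, M.Indep I ∧ I ⊆ X ∧ I.ncard = n} with hRdef
  have hbdd : BddAbove R := by
    refine ⟨M.E.ncard, fun n hn => ?_⟩
    obtain ⟨I, hI, hIX, rfl⟩ := hn
    exact Set.ncard_le_ncard (hIX.trans hX) hE
  have h0 : (0 : ℕ) ∈ R := ⟨∅, M.empty_indep, Set.empty_subset _, by simp⟩
  have hmem : s ∈ R := by
    have h := Nat.sSup_mem ⟨0, h0⟩ hbdd
    rwa [show sSup R = s from hr] at h
  obtain ⟨I0, hI0, hI0X, hI0card⟩ := hmem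
  have hsE : s ≤ M.E.ncard := hI0card ▸ Set.ncard_le_ncard (hI0X.trans hX) hE
  have hcard_le : ∀ I, M.Indep I → I ⊆ X → I.ncard ≤ s := by
    intro I hI hIX
    have h : I.ncard ∈ R := ⟨I, hI, hIX, rfl⟩
    exact le_trans (le_csSup hbdd h) (le_of_eq hr)
  have hindep : ∀ Y ⊆ X, Y.ncard ≤ s → M.Indep Y := by
    intro Y hYX hYs
    by_contra hdep
    have hYE : Y ⊆ M.E := hYX.trans hX
    have hYfin : Y.Finite := hE.subset hYE
    have hYdep : M.Dep Y := ⟨hdep, hYE⟩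
    obtain ⟨C0, hC0Y, hC0⟩ := hYdep.exists_isCircuit'_subset hYfin
    obtain ⟨S, hC0S, hSE, hScard⟩ :=
      Set.exists_subsuperset_card_eq (hC0Y.trans hYE)
        (le_trans (Set.ncard_le_ncard hC0Y hYfin) hYs) hsE
    obtain ⟨C, hC, hCcard, hSC⟩ := hM.1 S hSE hScard
    have hCC0 : C ⊆ C0 := hC.2 hC0.1 (hC0S.trans hSC)
    have hCle : C.ncard ≤ s :=
      le_trans (Set.ncard_le_ncard (hCC0.trans hC0Y) hYfin) hYs
    omega
  have hpart1 : ∀ Y ⊆ X, (M.Indep Y ↔ Y.ncard ≤ s) :=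
    fun Y hYX => ⟨fun hI => hcard_le Y hI hYX, fun h => hindep Y hYX h⟩
  refine ⟨hpart1, ?_⟩
  by_contra hlt
  push_neg at hlt
  -- hlt : s + 2 * t ≤ X.ncard
  obtain ⟨T, hTX, hTcard⟩ := Set.exists_subset_card_eq (show t ≤ X.ncard by omega)
  obtain ⟨Cc, hCc, hCccard, hTCc⟩ := hM.2 T (hTX.trans hX) hTcard
  have hCcE : Cc ⊆ M.E := by
    have := hCc.1.subset_ground
    rwa [Matroid.dual_ground] at this
  obtain ⟨x, hxT⟩ : T.Nonempty := by
    rw [← Set.ncard_pos (hXfin.subset hTX)]; omega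
  have hxCc : x ∈ Cc := hTCc hxT
  have hxE : x ∈ M.E := hX (hTX hxT)
  have hXdiff : s ≤ (X \ Cc).ncard := by
    have h1 : (X \ Cc).ncard = X.ncard - (X ∩ Cc).ncard := by
      rw [show X \ Cc = X \ (X ∩ Cc) by ext y; simp only [Set.mem_diff, Set.mem_inter_iff]; tauto]
      exact Set.ncard_diff Set.inter_subset_left (hXfin.subset Set.inter_subset_left)
    have h2 : (X ∩ Cc).ncard ≤ Cc.ncard :=
      Set.ncard_le_ncard Set.inter_subset_right (hE.subset hCcE)
    omega
  obtain ⟨Z, hZsub, hZcard⟩ := Set.exists_subset_card_eq hXdiff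
  have hZX : Z ⊆ X := hZsub.trans Set.diff_subset
  have hxZ : x ∉ Z := fun h => (hZsub h).2 hxCc
  set C : Set α := insert x Z with hCdef
  have hCX : C ⊆ X := Set.insert_subset (hTX hxT) hZX
  have hCcard : C.ncard = s + 1 := by
    rw [hCdef, Set.ncard_insert_of_notMem hxZ (hXfin.subset hZX), hZcard]
  have hZindep : M.Indep Z := hindep Z hZX (le_of_eq hZcard)
  have hCdep : M.Dep C := by
    refine ⟨fun hI => ?_, hCX.trans hX⟩
    have := hcard_le C hI hCX
    omega
  have hxcl : x ∈ M.closure Z := by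
    rw [hZindep.mem_closure_iff_of_notMem hxZ]
    exact hCdep
  have hZEC : Z ⊆ M.E \ Cc := fun z hz => ⟨hX (hZsub hz).1, (hZsub hz).2⟩
  have hxclE : x ∈ M.closure (M.E \ Cc) := M.closure_subset_closure hZEC hxcl
  -- Cc \ {x} is coindependent
  have hCcdiff_indep : M✶.Indep (Cc \ {x}) := by
    by_contra hdep
    have hD : M✶.Dep (Cc \ {x}) := by
      refine ⟨hdep, ?_⟩
      rw [Matroid.dual_ground]
      exact Set.diff_subset.trans hCcE
    have := hCc.2 hD Set.diff_subset
    exact (this hxCc).2 rfl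
  have hsp : M.Spanning (M.E \ (Cc \ {x})) :=
    (Matroid.coindep_iff_compl_spanning (hCcdiff_indep.subset_ground.trans_eq
      (Matroid.dual_ground))).1 hCcdiff_indep
  have hnotsp : ¬ M.Spanning (M.E \ Cc) := by
    intro hsp'
    exact hCc.1.1 ((Matroid.coindep_iff_compl_spanning hCcE).2 hsp')
  apply hnotsp
  have hEeq : M.E \ (Cc \ {x}) = insert x (M.E \ Cc) := by
    ext y
    simp only [Set.mem_diff, Set.mem_singleton_iff, Set.mem_insert_iff, not_and, not_not]
    constructor
    · rintro ⟨hyE, hy⟩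
      by_cases hyCc : y ∈ Cc
      · exact Or.inl (hy hyCc)
      · exact Or.inr ⟨hyE, hyCc⟩
    · rintro (rfl | ⟨hyE, hyCc⟩)
      · exact ⟨hxE, fun _ => rfl⟩
      · exact ⟨hyE, fun h => absurd h hyCc⟩
  rw [hEeq] at hsp
  have hcl : M.closure (insert x (M.E \ Cc)) = M.closure (M.E \ Cc) :=
    Matroid.closure_insert_eq_of_mem_closure hxclE
  rw [Matroid.spanning_iff_closure_eq] at hsp ⊢
  rw [← hcl]
  exact hsp
end
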